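/- Let n ≥ 1 be an integer. There exists a constant C > 0 depending only on n such that the following holds. Let ξ ∈ ℝ, λ > 0, and p = (p₀,…,p_n) ∈ ℤ^{n+1} with p₀ ≥ 1 and max_{1≤i≤n} |p₀ξ^i − p_i| ≤ p₀^{−λ}. Let B = ((a,b),(c,d)) ∈ M₂(ℤ) with cξ + d ≠ 0, set η := (aξ+b)/(cξ+d), and let q := φ_n(B)·p ∈ ℤ^{n+1}. Then |q₀| ≤ C(|cξ+d|^n·p₀ + ‖B‖^n·p₀^{−λ}) and max_{1≤i≤n} |q₀η^i − q_i| ≤ C·max(1,|η|)^n·‖B‖^n·p₀^{−λ}, where ‖B‖ = max{|a|,|b|,|c|,|d|}. -/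

import Mathlib

/-- For a 2×2 matrix `B = ((a,b),(c,d))` over a commutative ring, `phiMap n B` is the
`(n+1)×(n+1)` matrix whose `(i,j)` entry is the coefficient of `x^j` in the polynomial
`(ax+b)^i (cx+d)^{n−i}`. -/
noncomputable def phiMap {R : Type*} [CommRing R] (n : ℕ) (B : Matrix (Fin 2) (Fin 2) R) :
    Matrix (Fin (n + 1)) (Fin (n + 1)) R :=
  Matrix.of fun i j =>
    ((Polynomial.C (B 0 0) * Polynomial.X + Polynomial.C (B 0 1)) ^ (i : ℕ) *
      (Polynomial.C (B 1 0) * Polynomial.X + Polynomial.C (B 1 1)) ^ (n - (i : ℕ))).coeff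
      (j : ℕ)

set_option maxHeartbeats 1000000

open Polynomial in
lemma linear_pow_coeff_bound (a b : ℝ) (i : ℕ) :
    ∀ j, |((C a * X + C b) ^ i).coeff j| ≤ (|a| + |b|) ^ i := by
  induction i with
  | zero =>
    intro j
    simp only [pow_zero, coeff_one]
    split_ifs <;> simp
  | succ i ih =>
    intro j
    rw [pow_succ, mul_add, coeff_add]
    have h1 : (((C a * X + C b) ^ i) * (C a * X)).coeff j
        = a * (if j = 0 then 0 else ((C a * X + C b) ^ i).coeff (j - 1)) := by
      rw [show ((C a * X + C b) ^ i) * (C a * X) = C a * (((C a * X + C b) ^ i) * X) by ring,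
        coeff_C_mul]
      cases j with
      | zero => simp
      | succ j => simp [coeff_mul_X]
    have h2 : (((C a * X + C b) ^ i) * C b).coeff j = ((C a * X + C b) ^ i).coeff j * b :=
      coeff_mul_C _ _ _
    rw [h1, h2, pow_succ]
    have hb1 : |(if j = 0 then (0:ℝ) else ((C a * X + C b) ^ i).coeff (j - 1))| ≤ (|a| + |b|) ^ i := by
      split_ifs
      · simp; positivity
      · exact ih _
    calc |a * (if j = 0 then (0:ℝ) else ((C a * X + C b) ^ i).coeff (j - 1))
          + ((C a * X + C b) ^ i).coeff j * b|
        ≤ |a| * |(if j = 0 then (0:ℝ) else ((C a * X + C b) ^ i).coeff (j - 1))|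
          + |((C a * X + C b) ^ i).coeff j| * |b| := by
          refine (abs_add_le _ _).trans ?_
          rw [abs_mul, abs_mul]
      _ ≤ |a| * (|a| + |b|) ^ i + (|a| + |b|) ^ i * |b| :=
          add_le_add (mul_le_mul_of_nonneg_left hb1 (abs_nonneg a))
            (mul_le_mul_of_nonneg_right (ih j) (abs_nonneg b))
      _ = (|a| + |b|) ^ i * (|a| + |b|) := by ring

open Polynomial in
lemma prod_coeff_bound (a b c d : ℝ) (i k j : ℕ) :
    |((C a * X + C b) ^ i * (C c * X + C d) ^ k).coeff j|
      ≤ (j + 1 : ℝ) * ((|a| + |b|) ^ i * (|c| + |d|) ^ k) := by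
  rw [coeff_mul]
  calc |∑ x ∈ Finset.HasAntidiagonal.antidiagonal j, ((C a * X + C b) ^ i).coeff x.1 *
          ((C c * X + C d) ^ k).coeff x.2|
      ≤ ∑ x ∈ Finset.HasAntidiagonal.antidiagonal j, |((C a * X + C b) ^ i).coeff x.1 *
          ((C c * X + C d) ^ k).coeff x.2| := Finset.abs_sum_le_sum_abs _ _
    _ ≤ ∑ _x ∈ Finset.HasAntidiagonal.antidiagonal j, (|a| + |b|) ^ i * (|c| + |d|) ^ k := by
        refine Finset.sum_le_sum fun x _ => ?_
        rw [abs_mul]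
        exact mul_le_mul (linear_pow_coeff_bound a b i x.1)
          (linear_pow_coeff_bound c d k x.2) (abs_nonneg _) (by positivity)
    _ = (j + 1 : ℝ) * ((|a| + |b|) ^ i * (|c| + |d|) ^ k) := by
        rw [Finset.sum_const, Finset.Nat.card_antidiagonal]
        push_cast
        ring

open Polynomial in
/-- If `p ∈ ℤ^{n+1}` is a good simultaneous rational approximation to
`(ξ, ξ², …, ξⁿ)`, then `q = φ_n(B)·p` is a good simultaneous rational approximation to
`(η, η², …, ηⁿ)` where `η = (aξ+b)/(cξ+d)`, with the quantitative bounds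
`|q₀| ≤ C(|cξ+d|ⁿ p₀ + ‖B‖ⁿ p₀^{−λ})` and
`max_{1≤i≤n} |q₀ηⁱ − q_i| ≤ C·max(1,|η|)ⁿ·‖B‖ⁿ·p₀^{−λ}`. -/
theorem stmt9 (n : ℕ) (hn : 1 ≤ n) :
    ∃ C : ℝ, 0 < C ∧
      ∀ (ξ lam : ℝ), 0 < lam →
      ∀ p : Fin (n + 1) → ℤ, 1 ≤ p 0 →
      (∀ i : Fin (n + 1), 1 ≤ i.1 →
        |(p 0 : ℝ) * ξ ^ (i.1) - (p i : ℝ)| ≤ (p 0 : ℝ) ^ (-lam)) →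
      ∀ B : Matrix (Fin 2) (Fin 2) ℤ, (B 1 0 : ℝ) * ξ + (B 1 1 : ℝ) ≠ 0 →
      ∀ η : ℝ, η = ((B 0 0 : ℝ) * ξ + (B 0 1 : ℝ)) / ((B 1 0 : ℝ) * ξ + (B 1 1 : ℝ)) →
      ∀ q : Fin (n + 1) → ℤ, q = (phiMap n B).mulVec p →
      ∀ NB : ℝ,
        NB = max (max |(B 0 0 : ℝ)| |(B 0 1 : ℝ)|) (max |(B 1 0 : ℝ)| |(B 1 1 : ℝ)|) →
      (|(q 0 : ℝ)| ≤
          C * (|(B 1 0 : ℝ) * ξ + (B 1 1 : ℝ)| ^ n * (p 0 : ℝ) +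
            NB ^ n * (p 0 : ℝ) ^ (-lam)) ∧
        ∀ i : Fin (n + 1), 1 ≤ i.1 →
          |(q 0 : ℝ) * η ^ (i.1) - (q i : ℝ)| ≤
            C * max 1 |η| ^ n * NB ^ n * (p 0 : ℝ) ^ (-lam)) := by
  refine ⟨2 * (n + 1) ^ 2 * 2 ^ n, by positivity, ?_⟩
  intro ξ lam hlam p hp0 happ B hcd η hη q hq NB hNB
  set a : ℝ := (B 0 0 : ℝ) with ha
  set b : ℝ := (B 0 1 : ℝ) with hb
  set c : ℝ := (B 1 0 : ℝ) with hc
  set d : ℝ := (B 1 1 : ℝ) with hd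
  set P : ℕ → ℝ[X] := fun i => (C a * X + C b) ^ i * (C c * X + C d) ^ (n - i) with hP
  have hp0R : (1 : ℝ) ≤ (p 0 : ℝ) := by exact_mod_cast hp0
  have hrpow : (0 : ℝ) ≤ (p 0 : ℝ) ^ (-lam) := Real.rpow_nonneg (by linarith) _
  -- NB bounds
  have hNB0 : 0 ≤ NB := le_trans (abs_nonneg a) (by rw [hNB]; exact le_max_of_le_left (le_max_left _ _))
  have hab : |a| + |b| ≤ 2 * NB := by
    rw [hNB]
    have h1 : |a| ≤ max (max |a| |b|) (max |c| |d|) := le_max_of_le_left (le_max_left _ _)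
    have h2 : |b| ≤ max (max |a| |b|) (max |c| |d|) := le_max_of_le_left (le_max_right _ _)
    linarith
  have hcdNB : |c| + |d| ≤ 2 * NB := by
    rw [hNB]
    have h1 : |c| ≤ max (max |a| |b|) (max |c| |d|) := le_max_of_le_right (le_max_left _ _)
    have h2 : |d| ≤ max (max |a| |b|) (max |c| |d|) := le_max_of_le_right (le_max_right _ _)
    linarith
  -- cast of phiMap entries
  have hmap : ∀ i : ℕ, Polynomial.map (Int.castRingHom ℝ)
      ((Polynomial.C (B 0 0) * Polynomial.X + Polynomial.C (B 0 1)) ^ i *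
        (Polynomial.C (B 1 0) * Polynomial.X + Polynomial.C (B 1 1)) ^ (n - i)) = P i := by
    intro i
    simp [hP, Polynomial.map_mul, Polynomial.map_pow, Polynomial.map_add, Polynomial.map_C,
      Polynomial.map_X, ha, hb, hc, hd]
  have hcoeff : ∀ i j : ℕ, (((Polynomial.C (B 0 0) * Polynomial.X + Polynomial.C (B 0 1)) ^ i *
      (Polynomial.C (B 1 0) * Polynomial.X + Polynomial.C (B 1 1)) ^ (n - i)).coeff j : ℝ)
      = (P i).coeff j := by
    intro i j
    rw [← hmap i, Polynomial.coeff_map]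
    simp
  -- q expression
  have hqi : ∀ i : Fin (n + 1), (q i : ℝ) = ∑ j : Fin (n + 1), (P i.1).coeff j.1 * (p j : ℝ) := by
    intro i
    rw [hq]
    simp only [Matrix.mulVec, dotProduct, phiMap, Matrix.of_apply]
    push_cast
    exact Finset.sum_congr rfl fun j _ => by rw [hcoeff]
  -- degree bound
  have hdeg : ∀ i : Fin (n + 1), (P i.1).natDegree < n + 1 := by
    intro i
    have h1 : ((C a * X + C b) ^ (i.1)).natDegree ≤ i.1 * 1 :=
      le_trans (natDegree_pow_le) (by
        gcongr
        exact natDegree_linear_le)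
    have h2 : ((C c * X + C d) ^ (n - i.1)).natDegree ≤ (n - i.1) * 1 :=
      le_trans (natDegree_pow_le) (by
        gcongr
        exact natDegree_linear_le)
    have := natDegree_mul_le (p := (C a * X + C b) ^ (i.1)) (q := (C c * X + C d) ^ (n - i.1))
    have hi : i.1 ≤ n := Nat.lt_succ_iff.mp i.2
    simp only [hP]
    omega
  -- evaluation
  have heval : ∀ i : Fin (n + 1),
      ∑ j : Fin (n + 1), (P i.1).coeff j.1 * ξ ^ j.1 = (a * ξ + b) ^ i.1 * (c * ξ + d) ^ (n - i.1) := by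
    intro i
    have := Polynomial.eval_eq_sum_range' (hdeg i) ξ
    rw [Fin.sum_univ_eq_sum_range (fun j => (P i.1).coeff j * ξ ^ j), ← this]
    simp [hP]
  -- error terms
  have herr : ∀ j : Fin (n + 1), |(p j : ℝ) - (p 0 : ℝ) * ξ ^ j.1| ≤ (p 0 : ℝ) ^ (-lam) := by
    intro j
    rcases Nat.eq_zero_or_pos j.1 with h | h
    · have hj0 : j = 0 := Fin.ext h
      rw [hj0]
      simpa using hrpow
    · rw [abs_sub_comm]
      exact happ j h
  set E : Fin (n + 1) → ℝ :=
    fun i => (q i : ℝ) - (p 0 : ℝ) * ((a * ξ + b) ^ i.1 * (c * ξ + d) ^ (n - i.1)) with hE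
  have hEbound : ∀ i : Fin (n + 1), |E i| ≤ (n + 1) ^ 2 * (2 * NB) ^ n * (p 0 : ℝ) ^ (-lam) := by
    intro i
    have hi : i.1 ≤ n := Nat.lt_succ_iff.mp i.2
    have hEeq : E i = ∑ j : Fin (n + 1), (P i.1).coeff j.1 * ((p j : ℝ) - (p 0 : ℝ) * ξ ^ j.1) := by
      rw [hE]
      simp only [hqi i, ← heval i, mul_sub, Finset.mul_sum, ← Finset.sum_sub_distrib]
      exact Finset.sum_congr rfl fun j _ => by ring
    rw [hEeq]
    have hterm : ∀ j : Fin (n + 1), |(P i.1).coeff j.1 * ((p j : ℝ) - (p 0 : ℝ) * ξ ^ j.1)|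
        ≤ ((n + 1) * (2 * NB) ^ n) * (p 0 : ℝ) ^ (-lam) := by
      intro j
      rw [abs_mul]
      have h1 : |(P i.1).coeff j.1| ≤ (n + 1) * (2 * NB) ^ n := by
        refine le_trans (prod_coeff_bound a b c d i.1 (n - i.1) j.1) ?_
        have hj : ((j.1 : ℝ) + 1) ≤ (n : ℝ) + 1 := by
          have hjn := Nat.lt_succ_iff.mp j.2
          exact add_le_add_left (by exact_mod_cast hjn) 1
        have h2 : (|a| + |b|) ^ i.1 * (|c| + |d|) ^ (n - i.1) ≤ (2 * NB) ^ n := by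
          calc (|a| + |b|) ^ i.1 * (|c| + |d|) ^ (n - i.1)
              ≤ (2 * NB) ^ i.1 * (2 * NB) ^ (n - i.1) := by
                have h3 : (0:ℝ) ≤ |a| + |b| := by positivity
                have h4 : (0:ℝ) ≤ |c| + |d| := by positivity
                exact mul_le_mul (pow_le_pow_left₀ h3 hab _) (pow_le_pow_left₀ h4 hcdNB _)
                  (by positivity) (pow_nonneg (by linarith) _)
            _ = (2 * NB) ^ n := by rw [← pow_add]; congr 1; omega
        have hpos : (0 : ℝ) ≤ (|a| + |b|) ^ i.1 * (|c| + |d|) ^ (n - i.1) := by positivity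
        exact mul_le_mul hj h2 hpos (by positivity)
      have hK : (0:ℝ) ≤ ((n:ℝ) + 1) * (2 * NB) ^ n :=
        mul_nonneg (by positivity) (pow_nonneg (by linarith) _)
      exact mul_le_mul h1 (herr j) (abs_nonneg _) hK
    calc |∑ j : Fin (n + 1), (P i.1).coeff j.1 * ((p j : ℝ) - (p 0 : ℝ) * ξ ^ j.1)|
        ≤ ∑ j : Fin (n + 1), |(P i.1).coeff j.1 * ((p j : ℝ) - (p 0 : ℝ) * ξ ^ j.1)| :=
          Finset.abs_sum_le_sum_abs _ _
      _ ≤ ∑ _j : Fin (n + 1), ((n + 1) * (2 * NB) ^ n) * (p 0 : ℝ) ^ (-lam) :=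
          Finset.sum_le_sum fun j _ => hterm j
      _ = (n + 1) * (((n + 1) * (2 * NB) ^ n) * (p 0 : ℝ) ^ (-lam)) := by
          rw [Finset.sum_const, Finset.card_univ, Fintype.card_fin]
          push_cast
          ring
      _ = (n + 1) ^ 2 * (2 * NB) ^ n * (p 0 : ℝ) ^ (-lam) := by ring
  have hq0 : (q 0 : ℝ) = (p 0 : ℝ) * (c * ξ + d) ^ n + E 0 := by
    have : E 0 = (q 0 : ℝ) - (p 0 : ℝ) * ((a * ξ + b) ^ (0 : Fin (n+1)).1 * (c * ξ + d) ^ (n - (0 : Fin (n+1)).1)) := rfl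
    simp only [Fin.val_zero, pow_zero, one_mul, Nat.sub_zero] at this
    linarith
  constructor
  · rw [hq0]
    have h1 : |(p 0 : ℝ) * (c * ξ + d) ^ n + E 0| ≤ (p 0 : ℝ) * |c * ξ + d| ^ n + |E 0| := by
      refine le_trans (abs_add_le _ _) ?_
      rw [abs_mul, abs_pow]
      gcongr
      rw [abs_of_nonneg (by linarith)]
    refine le_trans h1 ?_
    have h2 := hEbound 0
    set D : ℝ := ((n : ℝ) + 1) ^ 2 * 2 ^ n with hD
    have h2' : |E 0| ≤ D * (NB ^ n * (p 0 : ℝ) ^ (-lam)) := by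
      refine le_trans h2 (le_of_eq ?_)
      rw [hD, mul_pow]
      ring
    have hD1 : (1 : ℝ) ≤ D := by
      rw [hD]
      have ha1 : (1 : ℝ) ≤ ((n : ℝ) + 1) ^ 2 := by nlinarith [Nat.cast_nonneg (α := ℝ) n]
      have ha2 : (1 : ℝ) ≤ (2 : ℝ) ^ n := one_le_pow₀ (by norm_num)
      nlinarith
    have hT1 : (0 : ℝ) ≤ |c * ξ + d| ^ n * (p 0 : ℝ) :=
      mul_nonneg (pow_nonneg (abs_nonneg _) n) (by linarith)
    have hT2 : (0 : ℝ) ≤ NB ^ n * (p 0 : ℝ) ^ (-lam) := mul_nonneg (pow_nonneg hNB0 n) hrpow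
    have k1 : (0 : ℝ) ≤ (2 * D - 1) * (|c * ξ + d| ^ n * (p 0 : ℝ)) :=
      mul_nonneg (by linarith) hT1
    have k2 : (0 : ℝ) ≤ D * (NB ^ n * (p 0 : ℝ) ^ (-lam)) := mul_nonneg (by linarith) hT2
    calc (p 0 : ℝ) * |c * ξ + d| ^ n + |E 0|
        ≤ 2 * D * (|c * ξ + d| ^ n * (p 0 : ℝ)) + 2 * D * (NB ^ n * (p 0 : ℝ) ^ (-lam)) := by
          linarith [h2', k1, k2]
      _ = 2 * ((n : ℝ) + 1) ^ 2 * 2 ^ n *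
          (|c * ξ + d| ^ n * (p 0 : ℝ) + NB ^ n * (p 0 : ℝ) ^ (-lam)) := by
          rw [hD]; ring
  · intro i hi1
    have hi : i.1 ≤ n := Nat.lt_succ_iff.mp i.2
    -- key identity
    have hkey : (c * ξ + d) ^ n * η ^ i.1 = (a * ξ + b) ^ i.1 * (c * ξ + d) ^ (n - i.1) := by
      rw [hη, div_pow, ← mul_div_assoc, div_eq_iff (pow_ne_zero _ hcd), mul_assoc,
        ← pow_add, show n - i.1 + i.1 = n by omega]
      ring
    have hqieq : (q i : ℝ) = (p 0 : ℝ) * ((a * ξ + b) ^ i.1 * (c * ξ + d) ^ (n - i.1)) + E i := by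
      simp [hE]
    have hdiff : (q 0 : ℝ) * η ^ i.1 - (q i : ℝ) = E 0 * η ^ i.1 - E i := by
      rw [hq0, hqieq, add_mul, mul_assoc, hkey]
      ring
    rw [hdiff]
    have hmax1 : (1 : ℝ) ≤ max 1 |η| := le_max_left _ _
    have hetai : |η| ^ i.1 ≤ max 1 |η| ^ n :=
      le_trans (pow_le_pow_left₀ (abs_nonneg η) (le_max_right _ _) i.1)
        (pow_le_pow_right₀ hmax1 hi)
    have hone : (1 : ℝ) ≤ max 1 |η| ^ n := one_le_pow₀ hmax1
    have hE0 := hEbound 0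
    have hEi := hEbound i
    have hNBn : (2 * NB) ^ n = 2 ^ n * NB ^ n := mul_pow 2 NB n
    rw [hNBn] at hE0 hEi
    calc |E 0 * η ^ i.1 - E i| ≤ |E 0| * |η| ^ i.1 + |E i| := by
          refine le_trans (abs_sub _ _) ?_
          rw [abs_mul, abs_pow]
      _ ≤ ((n + 1) ^ 2 * (2 ^ n * NB ^ n) * (p 0 : ℝ) ^ (-lam)) * max 1 |η| ^ n
          + ((n + 1) ^ 2 * (2 ^ n * NB ^ n) * (p 0 : ℝ) ^ (-lam)) * max 1 |η| ^ n := by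
          have hKnn : (0 : ℝ) ≤ ((n : ℝ) + 1) ^ 2 * (2 ^ n * NB ^ n) * (p 0 : ℝ) ^ (-lam) := by
            have : (0 : ℝ) ≤ 2 ^ n * NB ^ n :=
              mul_nonneg (by positivity) (pow_nonneg hNB0 n)
            have h1 : (0 : ℝ) ≤ ((n : ℝ) + 1) ^ 2 := by positivity
            exact mul_nonneg (mul_nonneg h1 this) hrpow
          exact add_le_add
            (mul_le_mul hE0 hetai (pow_nonneg (abs_nonneg η) _) hKnn)
            (hEi.trans (le_mul_of_one_le_right hKnn hone))
      _ = 2 * (n + 1) ^ 2 * 2 ^ n * max 1 |η| ^ n * NB ^ n * (p 0 : ℝ) ^ (-lam) := by ring
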